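/- Let X have more than two points and let [f₁,f₂] be a vertex of L(Γ(C(X))). Then the eccentricity of [f₁,f₂] in L(Γ(C(X))) equals 2 if Z(f₁) ∪ Z(f₂) = X, and equals 3 otherwise. -/

import Mathlib

open Set

/-- The zero set of a continuous real-valued function. -/
def zeroSet {X : Type*} [TopologicalSpace X] (f : C(X, ℝ)) : Set X := {x | f x = 0}

/-- The zero-set intersection graph `Γ(C(X))`: vertices are the non-units of `C(X)`
(those `f` with nonempty zero set), and distinct vertices `f`, `g` are adjacent
iff `Z(f) ∩ Z(g) ≠ ∅`. -/
def zGraph (X : Type*) [TopologicalSpace X] :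
    SimpleGraph {f : C(X, ℝ) // (zeroSet f).Nonempty} where
  Adj f g := f ≠ g ∧ (zeroSet f.1 ∩ zeroSet g.1).Nonempty
  symm := ⟨by
    rintro f g ⟨hne, hx⟩
    exact ⟨hne.symm, by rwa [Set.inter_comm]⟩⟩
  loopless := ⟨fun f h => h.1 rfl⟩

section Aux
open SimpleGraph

section Graph
variable {V : Type*} {G : SimpleGraph V}

lemma edist_le_one' {a b : V} (h : a = b ∨ G.Adj a b) : G.edist a b ≤ 1 := by
  rcases h with rfl | h
  · simp
  · exact le_of_eq (edist_eq_one_iff_adj.mpr h)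

lemma edist_le_two' {a b c : V} (h1 : a = b ∨ G.Adj a b) (h2 : b = c ∨ G.Adj b c) :
    G.edist a c ≤ 2 := by
  calc G.edist a c ≤ G.edist a b + G.edist b c := SimpleGraph.edist_triangle
  _ ≤ 1 + 1 := add_le_add (edist_le_one' h1) (edist_le_one' h2)
  _ = 2 := by norm_num

lemma edist_le_three' {a b c d : V} (h1 : a = b ∨ G.Adj a b) (h2 : b = c ∨ G.Adj b c)
    (h3 : c = d ∨ G.Adj c d) : G.edist a d ≤ 3 := by
  calc G.edist a d ≤ G.edist a c + G.edist c d := SimpleGraph.edist_triangle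
  _ ≤ 2 + 1 := add_le_add (edist_le_two' h1 h2) (edist_le_one' h3)
  _ = 3 := by norm_num

lemma two_le_edist' {a b : V} (h0 : a ≠ b) (h1 : ¬ G.Adj a b) : 2 ≤ G.edist a b := by
  by_contra hlt
  push_neg at hlt
  obtain ⟨p, hp⟩ := G.exists_walk_of_edist_ne_top (hlt.trans_le le_top).ne
  have hl : p.length ≤ 1 := by
    have h2 : (p.length : ℕ∞) < 2 := hp ▸ hlt
    have : p.length < 2 := by exact_mod_cast h2
    omega
  match p, hl with
  | .nil, _ => exact h0 rfl
  | .cons h .nil, _ => exact h1 h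
  | .cons _ (.cons _ _), hl => simp [SimpleGraph.Walk.length_cons] at hl

lemma three_le_edist' {a b : V} (h0 : a ≠ b) (h1 : ¬ G.Adj a b)
    (h2 : ∀ c, ¬ (G.Adj a c ∧ G.Adj c b)) : 3 ≤ G.edist a b := by
  by_contra hlt
  push_neg at hlt
  obtain ⟨p, hp⟩ := G.exists_walk_of_edist_ne_top (hlt.trans_le le_top).ne
  have hl : p.length ≤ 2 := by
    have h3 : (p.length : ℕ∞) < 3 := hp ▸ hlt
    have : p.length < 3 := by exact_mod_cast h3
    omega
  match p, hl with
  | .nil, _ => exact h0 rfl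
  | .cons h .nil, _ => exact h1 h
  | .cons h (.cons h' .nil), _ => exact h2 _ ⟨h, h'⟩
  | .cons _ (.cons _ (.cons _ _)), hl => simp [SimpleGraph.Walk.length_cons] at hl

lemma lineGraph_refladj {e₁ e₂ : G.edgeSet} (u : V) (h1 : u ∈ (e₁ : Sym2 V))
    (h2 : u ∈ (e₂ : Sym2 V)) : e₁ = e₂ ∨ G.lineGraph.Adj e₁ e₂ := by
  by_cases h : e₁ = e₂
  · exact Or.inl h
  · exact Or.inr (lineGraph_adj_iff_exists.mpr ⟨h, u, h1, h2⟩)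

end Graph

lemma exists_third {X : Type*} (hX : ∃ a b c : X, a ≠ b ∧ a ≠ c ∧ b ≠ c) (z w : X) :
    ∃ p, p ≠ z ∧ p ≠ w := by
  obtain ⟨a, b, c, hab, hac, hbc⟩ := hX
  by_cases h1 : a ≠ z ∧ a ≠ w
  · exact ⟨a, h1⟩
  by_cases h2 : b ≠ z ∧ b ≠ w
  · exact ⟨b, h2⟩
  push_neg at h1 h2
  refine ⟨c, ?_, ?_⟩ <;> rintro rfl <;>
    rcases Classical.em (a = c) with rfl | ha <;> simp_all

lemma exists_smul_notMem {X : Type*} [TopologicalSpace X] (h : C(X, ℝ)) (p : X)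
    (hp : h p ≠ 0) (s : Set C(X, ℝ)) (hs : s.Finite) : ∃ t : ℝ, t ≠ 0 ∧ t • h ∉ s := by
  have hinj : Function.Injective (fun t : ℝ => t • h) := by
    intro a b hab
    have hab' : a • h = b • h := hab
    have : (a • h) p = (b • h) p := by rw [hab']
    simpa [mul_eq_mul_right_iff, hp] using this
  have hfin : ((fun t : ℝ => t • h) ⁻¹' s).Finite :=
    Set.Finite.preimage hinj.injOn hs
  have : (insert (0:ℝ) ((fun t : ℝ => t • h) ⁻¹' s))ᶜ.Nonempty :=
    (Set.Finite.infinite_compl (hfin.insert 0)).nonempty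
  obtain ⟨t, ht⟩ := this
  simp only [Set.mem_compl_iff, Set.mem_insert_iff, Set.mem_preimage, not_or] at ht
  exact ⟨t, ht.1, ht.2⟩

lemma exists_fun_zero_on {X : Type*} [TopologicalSpace X] [CompletelyRegularSpace X]
    (K : Set X) (hK : IsClosed K) (p : X) (hp : p ∉ K) :
    ∃ g : C(X, ℝ), g p = 0 ∧ ∀ x ∈ K, g x = 1 := by
  obtain ⟨f, hf, hf0, hf1⟩ := CompletelyRegularSpace.completely_regular p K hK hp
  refine ⟨⟨fun x => (f x : ℝ), (continuous_subtype_val.comp hf)⟩, ?_, ?_⟩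
  · simp [hf0]
  · intro x hx
    have h1 := hf1 hx
    show ((f x : ℝ)) = 1
    rw [show f x = 1 from h1]
    rfl


end Aux

section Main

variable {X : Type*} [TopologicalSpace X] [T2Space X] [CompletelyRegularSpace X]

abbrev VV (X : Type*) [TopologicalSpace X] := {f : C(X, ℝ) // (zeroSet f).Nonempty}

lemma smul_apply_zero (t : ℝ) (h : C(X, ℝ)) (x : X) (hx : h x = 0) : (t • h) x = 0 := by
  rw [ContinuousMap.smul_apply, hx, smul_zero]

lemma test_adj (a b : VV X) (hne : a.1 ≠ b.1) (x : X) (h1 : a.1 x = 0) (h2 : b.1 x = 0) :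
    (zGraph X).Adj a b :=
  ⟨fun h => hne (congrArg Subtype.val h), ⟨x, h1, h2⟩⟩

end Main

/-- For X with more than two points, the eccentricity of a vertex [f₁,f₂] of the line
graph of Γ(C(X)) is 2 if Z(f₁) ∪ Z(f₂) = X, and 3 otherwise. -/
theorem lineGraph_eccentricity
    (X : Type*) [TopologicalSpace X] [T2Space X] [CompletelyRegularSpace X]
    (hX : ∃ a b c : X, a ≠ b ∧ a ≠ c ∧ b ≠ c)
    (f : Fin 2 → {f : C(X, ℝ) // (zeroSet f).Nonempty})
    (hf : (zGraph X).Adj (f 0) (f 1)) :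
    (zeroSet (f 0).1 ∪ zeroSet (f 1).1 = Set.univ →
      (⨆ e : (zGraph X).edgeSet,
        (zGraph X).lineGraph.edist ⟨s(f 0, f 1), (zGraph X).mem_edgeSet.mpr hf⟩ e) = 2) ∧
    (zeroSet (f 0).1 ∪ zeroSet (f 1).1 ≠ Set.univ →
      (⨆ e : (zGraph X).edgeSet,
        (zGraph X).lineGraph.edist ⟨s(f 0, f 1), (zGraph X).mem_edgeSet.mpr hf⟩ e) = 3) := by
  classical
  obtain ⟨hfne, w, hw0, hw1⟩ := id hf
  set v₀ : (zGraph X).edgeSet := ⟨s(f 0, f 1), (zGraph X).mem_edgeSet.mpr hf⟩ with hv₀def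
  constructor
  · intro huniv
    have upper2 : ∀ e : (zGraph X).edgeSet, (zGraph X).lineGraph.edist v₀ e ≤ 2 := by
      rintro ⟨s, hs⟩
      induction s using Sym2.ind with
      | _ g₁ g₂ =>
        obtain ⟨hne12, z, hz1, hz2⟩ := (zGraph X).mem_edgeSet.mp hs
        have hzu : z ∈ zeroSet (f 0).1 ∪ zeroSet (f 1).1 := huniv ▸ Set.mem_univ z
        rcases hzu with hz0 | hz0
        · by_cases hq : f 0 = g₁
          · refine le_trans (edist_le_one' (lineGraph_refladj (f 0) ?_ ?_)) (by norm_num)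
            · exact Sym2.mem_mk_left _ _
            · rw [hq]; exact Sym2.mem_mk_left _ _
          · exact edist_le_two'
              (lineGraph_refladj (e₂ := ⟨s(f 0, g₁), (zGraph X).mem_edgeSet.mpr ⟨hq, z, hz0, hz1⟩⟩)
                (f 0) (Sym2.mem_mk_left _ _) (Sym2.mem_mk_left _ _))
              (lineGraph_refladj g₁ (Sym2.mem_mk_right _ _) (Sym2.mem_mk_left _ _))
        · by_cases hq : f 1 = g₁
          · refine le_trans (edist_le_one' (lineGraph_refladj (f 1) ?_ ?_)) (by norm_num)
            · exact Sym2.mem_mk_right _ _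
            · rw [hq]; exact Sym2.mem_mk_left _ _
          · exact edist_le_two'
              (lineGraph_refladj (e₂ := ⟨s(f 1, g₁), (zGraph X).mem_edgeSet.mpr ⟨hq, z, hz0, hz1⟩⟩)
                (f 1) (Sym2.mem_mk_right _ _) (Sym2.mem_mk_left _ _))
              (lineGraph_refladj g₁ (Sym2.mem_mk_right _ _) (Sym2.mem_mk_left _ _))
    obtain ⟨p, hpw, -⟩ := exists_third hX w w
    obtain ⟨g, hgp, hgK⟩ := exists_fun_zero_on {w} (Set.finite_singleton w).isClosed p
      (by simpa using hpw)
    set h : C(X, ℝ) := 1 - g with hhdef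
    have hhw : h w = 0 := by simp [hhdef, hgK w rfl]
    have hhp : h p ≠ 0 := by simp [hhdef, hgp]
    obtain ⟨t₁, ht₁0, ht₁⟩ := exists_smul_notMem h p hhp {(f 0).1, (f 1).1}
      ((Set.finite_singleton _).insert _)
    obtain ⟨t₂, ht₂0, ht₂⟩ := exists_smul_notMem h p hhp (insert (t₁ • h) {(f 0).1, (f 1).1})
      (((Set.finite_singleton _).insert _).insert _)
    set A : VV X := ⟨t₁ • h, ⟨w, smul_apply_zero _ _ _ hhw⟩⟩ with hA
    set B : VV X := ⟨t₂ • h, ⟨w, smul_apply_zero _ _ _ hhw⟩⟩ with hB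
    have hA0 : A ≠ f 0 := fun hc => ht₁
      (by rw [show t₁ • h = (f 0).1 from congrArg Subtype.val hc]; exact Set.mem_insert _ _)
    have hA1 : A ≠ f 1 := fun hc => ht₁
      (by rw [show t₁ • h = (f 1).1 from congrArg Subtype.val hc]
          exact Set.mem_insert_of_mem _ rfl)
    have hB0 : B ≠ f 0 := fun hc => ht₂
      (by rw [show t₂ • h = (f 0).1 from congrArg Subtype.val hc]
          exact Set.mem_insert_of_mem _ (Set.mem_insert _ _))
    have hB1 : B ≠ f 1 := fun hc => ht₂
      (by rw [show t₂ • h = (f 1).1 from congrArg Subtype.val hc]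
          exact Set.mem_insert_of_mem _ (Set.mem_insert_of_mem _ rfl))
    have hABne : A ≠ B := fun hc => ht₂
      (by rw [show t₂ • h = t₁ • h from (congrArg Subtype.val hc).symm]
          exact Set.mem_insert _ _)
    set e₁ : (zGraph X).edgeSet := ⟨s(A, B), (zGraph X).mem_edgeSet.mpr
      ⟨hABne, w, smul_apply_zero _ _ _ hhw, smul_apply_zero _ _ _ hhw⟩⟩ with he₁
    have lower : (2 : ℕ∞) ≤ (zGraph X).lineGraph.edist v₀ e₁ := by
      apply two_le_edist'
      · intro hc
        have h' : s(f 0, f 1) = s(A, B) := congrArg Subtype.val hc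
        rw [Sym2.eq_iff] at h'
        rcases h' with ⟨h1, -⟩ | ⟨h1, -⟩
        · exact hA0 h1.symm
        · exact hB0 h1.symm
      · intro hc
        obtain ⟨-, u, hu1, hu2⟩ := SimpleGraph.lineGraph_adj_iff_exists.mp hc
        rcases Sym2.mem_iff.mp hu1 with rfl | rfl <;> rcases Sym2.mem_iff.mp hu2 with h' | h'
        · exact hA0 h'.symm
        · exact hB0 h'.symm
        · exact hA1 h'.symm
        · exact hB1 h'.symm
    exact le_antisymm (iSup_le upper2) (le_trans lower (le_iSup _ e₁))
  · intro hneu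
    obtain ⟨x₀, hx₀⟩ := (Set.ne_univ_iff_exists_notMem _).mp hneu
    have hKcl : IsClosed (zeroSet (f 0).1 ∪ zeroSet (f 1).1) :=
      (isClosed_eq (map_continuous _) continuous_const).union
        (isClosed_eq (map_continuous _) continuous_const)
    obtain ⟨g, hgx₀, hgK⟩ := exists_fun_zero_on _ hKcl x₀ hx₀
    set G₁ : VV X := ⟨g, ⟨x₀, hgx₀⟩⟩ with hG₁
    set G₂ : VV X := ⟨(2:ℝ) • g, ⟨x₀, smul_apply_zero _ _ _ hgx₀⟩⟩ with hG₂
    have keyne : ∀ u u' : VV X, (u = f 0 ∨ u = f 1) → (u' = G₁ ∨ u' = G₂) →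
        u ≠ u' ∧ ¬ (zGraph X).Adj u u' := by
      intro u u' hu hu'
      have hval : ∀ x, x ∈ zeroSet u.1 → u'.1 x ≠ 0 := by
        intro x hx
        have hgx : g x = 1 := by
          rcases hu with rfl | rfl
          · exact hgK x (Or.inl hx)
          · exact hgK x (Or.inr hx)
        rcases hu' with rfl | rfl
        · show g x ≠ 0
          rw [hgx]; exact one_ne_zero
        · show ((2:ℝ) • g) x ≠ 0
          rw [ContinuousMap.smul_apply, hgx]
          norm_num
      constructor
      · rintro rfl
        obtain ⟨x, hx⟩ := u.2
        exact hval x hx hx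
      · rintro ⟨-, x, hx1, hx2⟩
        exact hval x hx1 hx2
    have hG12 : G₁ ≠ G₂ := by
      intro hc
      have hc' : g = (2:ℝ) • g := congrArg Subtype.val hc
      have h2 := ContinuousMap.congr_fun hc' w
      rw [ContinuousMap.smul_apply, hgK w (Or.inl hw0)] at h2
      norm_num at h2
    set e₂ : (zGraph X).edgeSet := ⟨s(G₁, G₂), (zGraph X).mem_edgeSet.mpr
      ⟨hG12, x₀, hgx₀, smul_apply_zero _ _ _ hgx₀⟩⟩ with he₂
    have lower : (3 : ℕ∞) ≤ (zGraph X).lineGraph.edist v₀ e₂ := by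
      apply three_le_edist'
      · intro hc
        have h' : s(f 0, f 1) = s(G₁, G₂) := congrArg Subtype.val hc
        rw [Sym2.eq_iff] at h'
        rcases h' with ⟨h1, -⟩ | ⟨h1, -⟩
        · exact (keyne _ _ (Or.inl rfl) (Or.inl rfl)).1 h1
        · exact (keyne _ _ (Or.inl rfl) (Or.inr rfl)).1 h1
      · intro hc
        obtain ⟨-, u, hu1, hu2⟩ := SimpleGraph.lineGraph_adj_iff_exists.mp hc
        have h1 := Sym2.mem_iff.mp hu1
        have h2 := Sym2.mem_iff.mp hu2
        rcases h2 with rfl | rfl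
        · exact (keyne _ _ h1 (Or.inl rfl)).1 rfl
        · exact (keyne _ _ h1 (Or.inr rfl)).1 rfl
      · rintro m ⟨hm1, hm2⟩
        obtain ⟨-, u, hu1, hu2⟩ := SimpleGraph.lineGraph_adj_iff_exists.mp hm1
        obtain ⟨-, u', hu'1, hu'2⟩ := SimpleGraph.lineGraph_adj_iff_exists.mp hm2
        have h1 := Sym2.mem_iff.mp hu1
        have h2 := Sym2.mem_iff.mp hu'2
        by_cases huu : u = u'
        · exact (keyne u u' h1 h2).1 huu
        · have hm : (m : Sym2 (VV X)) = s(u, u') := (Sym2.mem_and_mem_iff huu).mp ⟨hu2, hu'1⟩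
          exact (keyne u u' h1 h2).2 ((zGraph X).mem_edgeSet.mp (hm ▸ m.2))
    have upper3 : ∀ e : (zGraph X).edgeSet, (zGraph X).lineGraph.edist v₀ e ≤ 3 := by
      rintro ⟨s, hs⟩
      induction s using Sym2.ind with
      | _ g₁ g₂ =>
        obtain ⟨hne12, z, hz1, hz2⟩ := (zGraph X).mem_edgeSet.mp hs
        obtain ⟨p, hpz, hpw⟩ := exists_third hX z w
        obtain ⟨q, hqp, hqK⟩ := exists_fun_zero_on {z, w}
          (((Set.finite_singleton w).insert z).isClosed) p (by simp [hpz, hpw])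
        set h : C(X, ℝ) := 1 - q with hhdef
        have hhz : h z = 0 := by simp [hhdef, hqK z (by simp)]
        have hhw : h w = 0 := by simp [hhdef, hqK w (by simp)]
        have hhp : h p ≠ 0 := by simp [hhdef, hqp]
        obtain ⟨t, ht0, ht⟩ := exists_smul_notMem h p hhp
          {(f 0).1, (f 1).1, g₁.1, g₂.1}
          ((((Set.finite_singleton _).insert _).insert _).insert _)
        set H : VV X := ⟨t • h, ⟨w, smul_apply_zero _ _ _ hhw⟩⟩ with hH
        have hH0 : (f 0).1 ≠ H.1 := fun hc => ht (by rw [← show (f 0).1 = t • h from hc]; simp)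
        have hHg₁ : H.1 ≠ g₁.1 := fun hc => ht (by rw [show t • h = g₁.1 from hc]; simp)
        exact edist_le_three'
          (lineGraph_refladj (e₂ := ⟨s(f 0, H), (zGraph X).mem_edgeSet.mpr
            (test_adj _ _ hH0 w hw0 (smul_apply_zero _ _ _ hhw))⟩)
            (f 0) (Sym2.mem_mk_left _ _) (Sym2.mem_mk_left _ _))
          (lineGraph_refladj (e₂ := ⟨s(H, g₁), (zGraph X).mem_edgeSet.mpr
            (test_adj _ _ hHg₁ z (smul_apply_zero _ _ _ hhz) hz1)⟩)
            H (Sym2.mem_mk_right _ _) (Sym2.mem_mk_left _ _))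
          (lineGraph_refladj g₁ (Sym2.mem_mk_right _ _) (Sym2.mem_mk_left _ _))
    exact le_antisymm (iSup_le upper3) (le_trans lower (le_iSup _ e₂))
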